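/- A telescopic numerical semigroup is symmetric: if S = ⟨a_1,...,a_k⟩ is telescopic with gcd(a_1,...,a_k) = 1 and Frobenius number F, then for every integer z, exactly one of z ∈ S and F − z ∈ S holds. -/

import Mathlib

private lemma main_telescopic : ∀ (m : ℕ), 1 ≤ m → ∀ (a : ℕ → ℕ), (∀ i < m, 0 < a i) →
    Finset.gcd (Finset.range m) a = 1 →
    (∀ i, 1 ≤ i → i < m → a i / Finset.gcd (Finset.range (i + 1)) a ∈
      AddSubmonoid.closure ((fun j => a j / Finset.gcd (Finset.range i) a) '' Set.Iio i)) →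
    ∃ F : ℤ, (¬ ∃ s ∈ AddSubmonoid.closure (a '' Set.Iio m), (s : ℤ) = F) ∧
      ∀ z : ℤ, (¬ ∃ s ∈ AddSubmonoid.closure (a '' Set.Iio m), (s : ℤ) = z) →
        z ≤ F ∧ ∃ s ∈ AddSubmonoid.closure (a '' Set.Iio m), (s : ℤ) = F - z := by
  intro m
  induction m with
  | zero => omega
  | succ n IH =>
    intro _ a ha hgcd htel
    by_cases hn : n = 0
    · -- base case: one generator, a 0 = 1
      subst hn
      have h1 : a 0 = 1 := by simpa using hgcd
      have hall : ∀ N : ℕ, N ∈ AddSubmonoid.closure (a '' Set.Iio 1) := by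
        intro N
        have h0 : a 0 ∈ a '' Set.Iio 1 := ⟨0, by norm_num, rfl⟩
        have := nsmul_mem (AddSubmonoid.subset_closure h0) N
        simpa [h1] using this
      refine ⟨-1, ?_, ?_⟩
      · rintro ⟨s, -, hs⟩; omega
      · intro z hz
        have hz0 : z < 0 := by
          by_contra h
          push_neg at h
          exact hz ⟨z.toNat, hall _, by omega⟩
        exact ⟨by omega, ⟨(-1 - z).toNat, hall _, by omega⟩⟩
    · -- inductive step
      have hn1 : 1 ≤ n := by omega
      obtain ⟨d, hd⟩ : ∃ d, d = Finset.gcd (Finset.range n) a := ⟨_, rfl⟩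
      have hdvd : ∀ j < n, d ∣ a j := fun j hj => hd ▸ Finset.gcd_dvd (Finset.mem_range.mpr hj)
      have hd0 : d ≠ 0 := by
        intro h
        have h0 := hdvd 0 (by omega)
        rw [h] at h0
        have := ha 0 (by omega)
        omega
      have hd1 : 1 ≤ d := Nat.pos_of_ne_zero hd0
      have hcop : Nat.Coprime (a n) d := by
        have h := hgcd
        rw [Finset.range_add_one, Finset.gcd_insert, ← hd] at h
        exact h
      obtain ⟨b, hbdef⟩ : ∃ b : ℕ → ℕ, b = fun j => a j / d := ⟨_, rfl⟩
      have hdb : ∀ j < n, d * b j = a j := by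
        intro j hj
        rw [hbdef]
        exact Nat.mul_div_cancel' (hdvd j hj)
      have hb_pos : ∀ i < n, 0 < b i := by
        intro i hi
        have := hdb i hi
        have := ha i (by omega)
        nlinarith
      have hdvdg : ∀ i ≤ n, d ∣ Finset.gcd (Finset.range i) a := by
        intro i hi
        exact Finset.dvd_gcd fun j hj => hdvd j (lt_of_lt_of_le (Finset.mem_range.mp hj) hi)
      have hgb : ∀ i ≤ n, Finset.gcd (Finset.range i) b = Finset.gcd (Finset.range i) a / d := by
        intro i hi
        have h1 : Finset.gcd (Finset.range i) (fun j => d * b j)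
            = d * Finset.gcd (Finset.range i) b := by
          simpa using (Finset.gcd_mul_left (s := Finset.range i) (f := b) (a := d))
        have h2 : Finset.gcd (Finset.range i) (fun j => d * b j)
            = Finset.gcd (Finset.range i) a :=
          Finset.gcd_congr rfl fun j hj => hdb j (lt_of_lt_of_le (Finset.mem_range.mp hj) hi)
        rw [← h2, h1, Nat.mul_div_cancel_left _ (Nat.pos_of_ne_zero hd0)]
      have hgcdb : Finset.gcd (Finset.range n) b = 1 := by
        rw [hgb n le_rfl, ← hd, Nat.div_self (Nat.pos_of_ne_zero hd0)]
      have htelb : ∀ i, 1 ≤ i → i < n → b i / Finset.gcd (Finset.range (i + 1)) b ∈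
          AddSubmonoid.closure ((fun j => b j / Finset.gcd (Finset.range i) b) '' Set.Iio i) := by
        intro i h1i hin
        have e1 : b i / Finset.gcd (Finset.range (i + 1)) b
            = a i / Finset.gcd (Finset.range (i + 1)) a := by
          rw [hgb (i + 1) hin, hbdef, Nat.div_div_eq_div_mul,
            Nat.mul_div_cancel' (hdvdg (i + 1) hin)]
        have e2 : (fun j => b j / Finset.gcd (Finset.range i) b) '' Set.Iio i
            = (fun j => a j / Finset.gcd (Finset.range i) a) '' Set.Iio i := by
          apply Set.image_congr
          intro j _
          rw [hgb i hin.le, hbdef, Nat.div_div_eq_div_mul,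
            Nat.mul_div_cancel' (hdvdg i hin.le)]
        rw [e1, e2]
        exact htel i h1i (by omega)
      -- a n is in the closure generated by b
      have han : a n ∈ AddSubmonoid.closure (b '' Set.Iio n) := by
        have h := htel n (by omega) (by omega)
        rw [hgcd, Nat.div_one, ← hd, ← hbdef] at h
        exact h
      obtain ⟨F', hF', hsym'⟩ := IH hn1 b hb_pos hgcdb htelb
      -- decomposition of S
      have decomp : ∀ s ∈ AddSubmonoid.closure (a '' Set.Iio (n + 1)),
          ∃ u ∈ AddSubmonoid.closure (b '' Set.Iio n), ∃ t : ℕ, s = d * u + t * a n := by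
        intro s hs
        induction hs using AddSubmonoid.closure_induction with
        | mem x hx =>
          obtain ⟨j, hj, rfl⟩ := hx
          have hj' : j < n + 1 := hj
          rcases Nat.lt_succ_iff_lt_or_eq.mp hj' with hjn | rfl
          · exact ⟨b j, AddSubmonoid.subset_closure ⟨j, hjn, rfl⟩, 0, by
              rw [← hdb j hjn]; ring⟩
          · exact ⟨0, zero_mem _, 1, by ring⟩
        | zero => exact ⟨0, zero_mem _, 0, by ring⟩
        | add x y hx hy ihx ihy =>
          obtain ⟨u, hu, t, rfl⟩ := ihx
          obtain ⟨v, hv, r, rfl⟩ := ihy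
          exact ⟨u + v, add_mem hu hv, t + r, by ring⟩
      -- building elements of S
      have build : ∀ u ∈ AddSubmonoid.closure (b '' Set.Iio n), ∀ t : ℕ,
          d * u + t * a n ∈ AddSubmonoid.closure (a '' Set.Iio (n + 1)) := by
        have hb2S : ∀ u ∈ AddSubmonoid.closure (b '' Set.Iio n),
            d * u ∈ AddSubmonoid.closure (a '' Set.Iio (n + 1)) := by
          intro u hu
          induction hu using AddSubmonoid.closure_induction with
          | mem x hx =>
            obtain ⟨j, hj, rfl⟩ := hx
            have hjn : j < n := hj
            rw [hdb j hjn]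
            exact AddSubmonoid.subset_closure ⟨j, by exact lt_trans hjn (Nat.lt_succ_self n), rfl⟩
          | zero => simpa using (zero_mem (AddSubmonoid.closure (a '' Set.Iio (n + 1))))
          | add x y hx hy ihx ihy => rw [mul_add]; exact add_mem ihx ihy
        intro u hu t
        have hanS : a n ∈ AddSubmonoid.closure (a '' Set.Iio (n + 1)) :=
          AddSubmonoid.subset_closure ⟨n, Nat.lt_succ_self n, rfl⟩
        have htn : t * a n ∈ AddSubmonoid.closure (a '' Set.Iio (n + 1)) := by
          simpa [smul_eq_mul] using nsmul_mem hanS t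
        exact add_mem (hb2S u hu) htn
      refine ⟨(d : ℤ) * F' + ((d : ℤ) - 1) * (a n : ℤ), ?_, ?_⟩
      · -- F is not representable
        rintro ⟨s, hs, hFs⟩
        obtain ⟨u, hu, t, rfl⟩ := decomp s hs
        push_cast at hFs
        have hco : IsCoprime (d : ℤ) (a n : ℤ) := by
          rw [Int.isCoprime_iff_gcd_eq_one, Int.gcd_natCast_natCast]
          exact hcop.symm
        have hkey : ((t : ℤ) - ((d : ℤ) - 1)) * (a n : ℤ) = (d : ℤ) * (F' - u) := by ring_nf; nlinarith [hFs]
        have hdZ : (d : ℤ) ∣ ((t : ℤ) - ((d : ℤ) - 1)) :=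
          hco.dvd_of_dvd_mul_right ⟨F' - (u : ℤ), hkey⟩
        obtain ⟨r, hr⟩ := hdZ
        have hr0 : 0 ≤ r := by
          by_contra h
          push_neg at h
          have : r ≤ -1 := by omega
          have hdz : (1 : ℤ) ≤ (d : ℤ) := by exact_mod_cast hd1
          have htz : (0 : ℤ) ≤ (t : ℤ) := Int.natCast_nonneg t
          nlinarith
        have hd0' : (d : ℤ) ≠ 0 := by exact_mod_cast hd0
        have hu_eq : (u : ℤ) = F' - r * (a n : ℤ) := by
          have h2 : (d : ℤ) * (u : ℤ) = (d : ℤ) * (F' - r * (a n : ℤ)) := by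
            linear_combination hFs - (a n : ℤ) * hr
          exact mul_left_cancel₀ hd0' h2
        have hmem : (u + r.toNat * a n : ℕ) ∈ AddSubmonoid.closure (b '' Set.Iio n) :=
          add_mem hu (by simpa [smul_eq_mul] using nsmul_mem han r.toNat)
        refine hF' ⟨u + r.toNat * a n, hmem, ?_⟩
        push_cast
        rw [Int.toNat_of_nonneg hr0]
        linarith
      · -- symmetry
        intro z hz
        haveI : NeZero d := ⟨hd0⟩
        obtain ⟨x, hx⟩ : ∃ x : ZMod d, x = (z : ZMod d) * ((a n : ZMod d))⁻¹ := ⟨_, rfl⟩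
        obtain ⟨t, htdef⟩ : ∃ t, t = x.val := ⟨_, rfl⟩
        have ht : t < d := htdef ▸ x.val_lt
        have hxz : ((t : ZMod d)) * ((a n : ℕ) : ZMod d) = ((z : ℤ) : ZMod d) := by
          rw [htdef, ZMod.natCast_zmod_val, hx]
          calc (z : ZMod d) * ((a n : ZMod d))⁻¹ * (a n : ZMod d)
              = (z : ZMod d) * ((a n : ZMod d) * ((a n : ZMod d))⁻¹) := by ring
            _ = (z : ZMod d) * 1 := by rw [ZMod.coe_mul_inv_eq_one _ hcop]
            _ = ((z : ℤ) : ZMod d) := by simp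
        have hdvd_z : (d : ℤ) ∣ (z - (t : ℤ) * (a n : ℤ)) := by
          rw [← ZMod.intCast_zmod_eq_zero_iff_dvd]
          push_cast
          rw [← hxz]
          ring
        obtain ⟨w, hw⟩ := hdvd_z
        have hwnotrep : ¬ ∃ u ∈ AddSubmonoid.closure (b '' Set.Iio n), (u : ℤ) = w := by
          rintro ⟨u, hu, huw⟩
          refine hz ⟨d * u + t * a n, build u hu t, ?_⟩
          push_cast
          rw [huw]
          linarith
        obtain ⟨hwle, v, hv, hvw⟩ := hsym' w hwnotrep
        have hc : ((d - 1 - t : ℕ) : ℤ) = (d : ℤ) - 1 - (t : ℤ) := by omega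
        refine ⟨?_, ⟨d * v + (d - 1 - t) * a n, build v hv _, ?_⟩⟩
        · have hzeq : z = (d : ℤ) * w + (t : ℤ) * (a n : ℤ) := by linarith
          have ha0 : (0 : ℤ) ≤ (a n : ℤ) := Int.natCast_nonneg _
          have hdz : (0 : ℤ) ≤ (d : ℤ) := Int.natCast_nonneg _
          have htz : (t : ℤ) ≤ (d : ℤ) - 1 := by omega
          nlinarith [mul_le_mul_of_nonneg_left hwle hdz,
            mul_le_mul_of_nonneg_right htz ha0]
        · push_cast [hc]
          linear_combination (d : ℤ) * hvw + hw

/-- a telescopic numerical semigroup is symmetric. If `S = ⟨a₁,…,a_k⟩`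
(here 0-indexed, generated by `a 0, …, a (k-1)`) is telescopic with
`gcd(a₁,…,a_k) = 1` and Frobenius number `F` (the largest integer not in `S`), then for
every integer `z`, exactly one of `z ∈ S` and `F − z ∈ S` holds. -/
theorem stmt_12 (k : ℕ) (hk : 1 ≤ k) (a : ℕ → ℕ) (ha : ∀ i < k, 0 < a i)
    (hgcd : Finset.gcd (Finset.range k) a = 1)
    (htel : ∀ i, 1 ≤ i → i < k →
      a i / Finset.gcd (Finset.range (i + 1)) a ∈
        AddSubmonoid.closure ((fun j => a j / Finset.gcd (Finset.range i) a) '' Set.Iio i))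
    (F : ℤ)
    (hF : ¬ ∃ s ∈ AddSubmonoid.closure (a '' Set.Iio k), (s : ℤ) = F)
    (hFmax : ∀ z : ℤ, (¬ ∃ s ∈ AddSubmonoid.closure (a '' Set.Iio k), (s : ℤ) = z) → z ≤ F) :
    ∀ z : ℤ,
      Xor' (∃ s ∈ AddSubmonoid.closure (a '' Set.Iio k), (s : ℤ) = z)
        (∃ s ∈ AddSubmonoid.closure (a '' Set.Iio k), (s : ℤ) = F - z) := by
  obtain ⟨F₀, hF₀, hsym⟩ := main_telescopic k hk a ha hgcd htel
  have hFeq : F = F₀ := le_antisymm (hsym F hF).1 (hFmax F₀ hF₀)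
  subst hFeq
  intro z
  by_cases hrep : ∃ s ∈ AddSubmonoid.closure (a '' Set.Iio k), (s : ℤ) = z
  · refine Or.inl ⟨hrep, ?_⟩
    rintro ⟨s', hs', hz'⟩
    obtain ⟨s, hs, hzz⟩ := hrep
    exact hF₀ ⟨s + s', add_mem hs hs', by push_cast; linarith⟩
  · exact Or.inr ⟨(hsym z hrep).2, hrep⟩
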